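/- Let X and Y be finite nonempty types, ρ a probability mass function on X, and for each x let π_ref(·|x) and μ(·|x) be probability mass functions on Y with the support of μ(·|x) contained in the support of π_ref(·|x); let r : X × Y → ℝ and τ > 0. Define V*(x) = τ·log(Σ_y π_ref(y|x)·exp(r(x,y)/τ)) and π*(y|x) = π_ref(y|x)·exp(r(x,y)/τ)/exp(V*(x)/τ). Then the DRO loss satisfies L(π*, V*) = 0, and L(π, V) ≥ 0 for every conditional policy π (positive on the support of π_ref(·|x)) and every V : X → ℝ; hence (π*, V*) is a global minimum of L. -/

import Mathlib

/-- The DRO loss of a conditional policy `π` and a value function `V`. -/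
noncomputable def droLoss {X Y : Type*} [Fintype X] [Fintype Y]
    (ρ : X → ℝ) (μ πref : X → Y → ℝ) (r : X → Y → ℝ) (τ : ℝ)
    (π : X → Y → ℝ) (V : X → ℝ) : ℝ :=
  (1 / 2) * ∑ x, ρ x *
    ∑ y, μ x y * (r x y - V x - τ * Real.log (π x y / πref x y)) ^ 2

theorem dro_stmt_3 {X Y : Type*} [Fintype X] [Fintype Y] [Nonempty X] [Nonempty Y]
    (ρ : X → ℝ) (hρ0 : ∀ x, 0 ≤ ρ x) (hρ1 : ∑ x, ρ x = 1)
    (πref : X → Y → ℝ) (href0 : ∀ x y, 0 ≤ πref x y) (href1 : ∀ x, ∑ y, πref x y = 1)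
    (μ : X → Y → ℝ) (hμ0 : ∀ x y, 0 ≤ μ x y) (hμ1 : ∀ x, ∑ y, μ x y = 1)
    (hsupp : ∀ x y, 0 < μ x y → 0 < πref x y)
    (r : X → Y → ℝ) (τ : ℝ) (hτ : 0 < τ)
    (Vstar : X → ℝ)
    (hV : ∀ x, Vstar x = τ * Real.log (∑ y, πref x y * Real.exp (r x y / τ)))
    (πstar : X → Y → ℝ)
    (hπ : ∀ x y, πstar x y = πref x y * Real.exp (r x y / τ) / Real.exp (Vstar x / τ)) :
    droLoss ρ μ πref r τ πstar Vstar = 0 ∧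
    ∀ (π : X → Y → ℝ) (V : X → ℝ), (∀ x y, 0 ≤ π x y) → (∀ x, ∑ y, π x y = 1) →
      (∀ x y, 0 < πref x y → 0 < π x y) →
      0 ≤ droLoss ρ μ πref r τ π V := by
  constructor
  · unfold droLoss
    rw [mul_eq_zero]
    right
    apply Finset.sum_eq_zero
    intro x _
    rw [mul_eq_zero]
    right
    apply Finset.sum_eq_zero
    intro y _
    rcases eq_or_lt_of_le (hμ0 x y) with h | h
    · rw [← h, zero_mul]
    have hpref := hsupp x y h
    have : πstar x y / πref x y = Real.exp (r x y / τ - Vstar x / τ) := by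
      rw [hπ, Real.exp_sub]
      field_simp
    rw [this, Real.log_exp]
    have : r x y - Vstar x - τ * (r x y / τ - Vstar x / τ) = 0 := by
      field_simp
      ring
    rw [this]
    simp
  · intro π V hπ0 hπ1 hπpos
    unfold droLoss
    apply mul_nonneg (by norm_num)
    apply Finset.sum_nonneg
    intro x _
    apply mul_nonneg (hρ0 x)
    apply Finset.sum_nonneg
    intro y _
    exact mul_nonneg (hμ0 x y) (sq_nonneg _)
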